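/- Let P be a monic polynomial of degree q ≥ 1 and r > 0. Let μ be area (planar Lebesgue) measure restricted to the lemniscate region {z : |P(z)| ≤ r}. Then the Christoffel function of the measure |P(z)|² dμ(z) is bounded below away from zero uniformly on compact subsets of {z : |P(z)| < r}: for each compact K ⊂ {z : |P(z)| < r} there is c_K > 0 such that λ(u; |P|²dA) ≥ c_K for all u ∈ K. Equivalently, Σ_{n=0}^∞ |φ_n(u; |P|²dA)|² ≤ c_K^{-1} on K. -/

import Mathlib

open MeasureTheory Polynomial
open scoped ENNReal NNReal

section Aux

open scoped Real

lemma aux_pow_card_le_prod (m : Multiset ℝ) (ε : ℝ) (hε : 0 ≤ ε) (h : ∀ x ∈ m, ε ≤ x) :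
    ε ^ Multiset.card m ≤ m.prod := by
  induction m using Multiset.induction with
  | empty => simp
  | cons a s ih =>
      simp only [Multiset.card_cons, Multiset.prod_cons, pow_succ]
      have ha : ε ≤ a := h a (Multiset.mem_cons_self a s)
      have hs : ε ^ Multiset.card s ≤ s.prod :=
        ih fun x hx => h x (Multiset.mem_cons_of_mem hx)
      have h0 : (0:ℝ) ≤ s.prod := le_trans (pow_nonneg hε _) hs
      calc ε ^ Multiset.card s * ε ≤ s.prod * a := mul_le_mul hs ha hε h0
        _ = a * s.prod := mul_comm _ _

lemma aux_good_measure (s : Finset ℝ) (δ ε : ℝ) (hδ : 0 < δ) (hε : 0 < ε)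
    (h : (s.card : ℝ) * (2*ε) ≤ δ/8) :
    ENNReal.ofReal (3*δ/8) ≤ volume (Set.Icc (δ/2) δ \ ⋃ a ∈ s, Set.Ioo (a-ε) (a+ε)) := by
  have hIcc : volume (Set.Icc (δ/2) δ) = ENNReal.ofReal (δ/2) := by
    rw [Real.volume_Icc]; congr 1; ring
  have hbad : volume (⋃ a ∈ s, Set.Ioo (a-ε) (a+ε)) ≤ ENNReal.ofReal (δ/8) := by
    refine le_trans (measure_biUnion_finset_le s _) ?_
    have heach : ∀ a ∈ s, volume (Set.Ioo (a-ε) (a+ε)) = ENNReal.ofReal (2*ε) := by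
      intro a _; rw [Real.volume_Ioo]; congr 1; ring
    rw [Finset.sum_congr rfl heach]
    simp only [Finset.sum_const, nsmul_eq_mul]
    calc (s.card : ℝ≥0∞) * ENNReal.ofReal (2*ε)
        = ENNReal.ofReal ((s.card : ℝ) * (2*ε)) := by
          conv_rhs => rw [ENNReal.ofReal_mul (by positivity : (0:ℝ) ≤ (s.card:ℝ))]
          rw [ENNReal.ofReal_natCast]
      _ ≤ ENNReal.ofReal (δ/8) := ENNReal.ofReal_le_ofReal h
  calc ENNReal.ofReal (3*δ/8)
      = ENNReal.ofReal (δ/2) - ENNReal.ofReal (δ/8) := by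
        rw [← ENNReal.ofReal_sub _ (by positivity)]; congr 1; ring
    _ ≤ volume (Set.Icc (δ/2) δ) - volume (⋃ a ∈ s, Set.Ioo (a-ε) (a+ε)) := by
        rw [hIcc]; exact tsub_le_tsub le_rfl hbad
    _ ≤ volume (Set.Icc (δ/2) δ \ ⋃ a ∈ s, Set.Ioo (a-ε) (a+ε)) := le_measure_diff

lemma aux_circle (Q P₀ : Polynomial ℂ) (u : ℂ) (ρ m : ℝ) (hρ : 0 < ρ) (hm : 0 < m)
    (hQ : Q.eval u = 1) (hPm : ∀ θ : ℝ, m ≤ ‖P₀.eval (circleMap u ρ θ)‖) :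
    2 * π * m ^ 2 ≤ ∫ θ in Set.Ioo (-π) π, ‖(Q * P₀).eval (circleMap u ρ θ)‖ ^ 2 := by
  have hπ := Real.pi_pos
  have hQc : Continuous fun θ : ℝ => ‖Q.eval (circleMap u ρ θ)‖ :=
    (Q.continuous.comp (continuous_circleMap u ρ)).norm
  have hQPc : Continuous fun θ : ℝ => ‖(Q * P₀).eval (circleMap u ρ θ)‖ :=
    ((Q * P₀).continuous.comp (continuous_circleMap u ρ)).norm
  -- Cauchy integral formula
  have hd : DiffContOnCl ℂ (fun z => Q.eval z) (Metric.ball u ρ) :=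
    Q.differentiable.diffContOnCl
  have hC := hd.circleIntegral_sub_inv_smul (Metric.mem_ball_self hρ)
  have h1 : 2 * π ≤ ∫ θ in (0:ℝ)..(2*π), ‖Q.eval (circleMap u ρ θ)‖ := by
    have hnorm : ‖(2 * (π:ℝ) * Complex.I : ℂ) • Q.eval u‖ = 2 * π := by
      rw [hQ, norm_smul]
      simp [abs_of_pos hπ]
    have hb : ‖∮ z in C(u, ρ), (z - u)⁻¹ • Q.eval z‖
        ≤ ∫ θ in (0:ℝ)..(2*π), ‖Q.eval (circleMap u ρ θ)‖ := by
      rw [circleIntegral]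
      refine le_trans (intervalIntegral.norm_integral_le_integral_norm (by positivity)) ?_
      refine le_of_eq (intervalIntegral.integral_congr fun θ _ => ?_)
      rw [deriv_circleMap, norm_smul, norm_smul, norm_inv, circleMap_sub_center]
      simp only [norm_mul, Complex.norm_I, mul_one, norm_circleMap_zero,
        abs_of_pos hρ]
      field_simp
    calc 2 * π = ‖(2 * (π:ℝ) * Complex.I : ℂ) • Q.eval u‖ := hnorm.symm
      _ = ‖∮ z in C(u, ρ), (z - u)⁻¹ • Q.eval z‖ := by
          rw [hC]
      _ ≤ _ := hb
  -- multiply by the weight lower bound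
  have h2 : 2 * π * m ≤ ∫ θ in (0:ℝ)..(2*π), ‖(Q * P₀).eval (circleMap u ρ θ)‖ := by
    have hpt : ∀ θ ∈ Set.Icc (0:ℝ) (2*π),
        m * ‖Q.eval (circleMap u ρ θ)‖ ≤ ‖(Q * P₀).eval (circleMap u ρ θ)‖ := by
      intro θ _
      rw [eval_mul, norm_mul, mul_comm (‖Q.eval (circleMap u ρ θ)‖)]
      exact mul_le_mul_of_nonneg_right (hPm θ) (norm_nonneg _)
    have hmono := intervalIntegral.integral_mono_on (by positivity)
      ((continuous_const.mul hQc).intervalIntegrable (μ := volume) 0 (2*π))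
      (hQPc.intervalIntegrable (μ := volume) 0 (2*π)) hpt
    calc 2 * π * m = m * (2 * π) := by ring
      _ ≤ m * ∫ θ in (0:ℝ)..(2*π), ‖Q.eval (circleMap u ρ θ)‖ :=
          mul_le_mul_of_nonneg_left h1 hm.le
      _ = ∫ θ in (0:ℝ)..(2*π), m * ‖Q.eval (circleMap u ρ θ)‖ :=
          (intervalIntegral.integral_const_mul m _).symm
      _ ≤ _ := hmono
  -- Cauchy-Schwarz-type step via pointwise inequality
  have h3 : 2 * π * m ^ 2 ≤ ∫ θ in (0:ℝ)..(2*π), ‖(Q * P₀).eval (circleMap u ρ θ)‖ ^ 2 := by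
    have hpt : ∀ θ ∈ Set.Icc (0:ℝ) (2*π),
        ‖(Q * P₀).eval (circleMap u ρ θ)‖
          ≤ ‖(Q * P₀).eval (circleMap u ρ θ)‖ ^ 2 / (2*m) + m/2 := by
      intro θ _
      set x := ‖(Q * P₀).eval (circleMap u ρ θ)‖
      have hsq : 0 ≤ (x - m)^2 := sq_nonneg _
      rw [div_add' _ _ _ (by positivity), le_div_iff₀ (by positivity)]
      nlinarith
    have hmono := intervalIntegral.integral_mono_on (by positivity)
      (hQPc.intervalIntegrable (μ := volume) 0 (2*π))
      ((((hQPc.pow 2).div_const (2*m)).add continuous_const).intervalIntegrable (μ := volume) 0 (2*π)) hpt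
    have hsplit : ∫ θ in (0:ℝ)..(2*π),
        (‖(Q * P₀).eval (circleMap u ρ θ)‖ ^ 2 / (2*m) + m/2)
        = (∫ θ in (0:ℝ)..(2*π), ‖(Q * P₀).eval (circleMap u ρ θ)‖ ^ 2) / (2*m) + π * m := by
      rw [intervalIntegral.integral_add (f := fun θ => ‖(Q * P₀).eval (circleMap u ρ θ)‖ ^ 2 / (2*m)) (g := fun _ => m/2) (((hQPc.pow 2).div_const (2*m)).intervalIntegrable (μ := volume) 0 (2*π))
        (intervalIntegrable_const), intervalIntegral.integral_div,
        intervalIntegral.integral_const]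
      simp only [smul_eq_mul, sub_zero]
      ring
    have hΙ : 2 * π * m ≤ (∫ θ in (0:ℝ)..(2*π), ‖(Q * P₀).eval (circleMap u ρ θ)‖ ^ 2) / (2*m)
        + π * m := by
      calc 2 * π * m ≤ _ := h2
        _ ≤ _ := hmono
        _ = _ := hsplit
    have := sub_le_iff_le_add.mpr hΙ
    have h4 : π * m ≤ (∫ θ in (0:ℝ)..(2*π), ‖(Q * P₀).eval (circleMap u ρ θ)‖ ^ 2) / (2*m) := by
      linarith
    rw [le_div_iff₀ (by positivity)] at h4
    nlinarith
  -- shift to (-π, π)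
  have hper : Function.Periodic (fun θ : ℝ => ‖(Q * P₀).eval (circleMap u ρ θ)‖ ^ 2) (2*π) :=
    (periodic_circleMap u ρ).comp fun z => ‖(Q * P₀).eval z‖ ^ 2
  have hshift := hper.intervalIntegral_add_eq 0 (-π)
  have hpi : -π + 2*π = π := by ring
  rw [zero_add, hpi] at hshift
  calc 2 * π * m ^ 2 ≤ ∫ θ in (0:ℝ)..(2*π), ‖(Q * P₀).eval (circleMap u ρ θ)‖ ^ 2 := h3
    _ = ∫ θ in (-π)..π, ‖(Q * P₀).eval (circleMap u ρ θ)‖ ^ 2 := hshift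
    _ = ∫ θ in Set.Ioc (-π) π, ‖(Q * P₀).eval (circleMap u ρ θ)‖ ^ 2 :=
        intervalIntegral.integral_of_le (by linarith)
    _ = ∫ θ in Set.Ioo (-π) π, ‖(Q * P₀).eval (circleMap u ρ θ)‖ ^ 2 :=
        integral_Ioc_eq_integral_Ioo

end Aux

/-- For area measure on the lemniscate `{|P| ≤ r}`, the Christoffel function of the
measure `|P|² dA` is bounded below away from zero uniformly on compact subsets of
`{|P| < r}`. -/
theorem stmt8 (P : Polynomial ℂ) (hP : P.Monic) (hq : 1 ≤ P.natDegree) (r : ℝ) (hr : 0 < r)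
    (K : Set ℂ) (hK : IsCompact K) (hKsub : K ⊆ {z : ℂ | ‖P.eval z‖ < r}) :
    ∃ c > 0, ∀ u ∈ K,
      c ≤ sInf {t : ℝ | ∃ Q : Polynomial ℂ, Q.eval u = 1 ∧
        t = ∫ z, ‖Q.eval z‖ ^ 2
          ∂((volume.restrict {z : ℂ | ‖P.eval z‖ ≤ r}).withDensity
              (fun z => (‖P.eval z‖₊ : ℝ≥0∞) ^ 2))} := by
  have hπ := Real.pi_pos
  set S : Set ℂ := {z : ℂ | ‖P.eval z‖ ≤ r} with hSdef
  set U : Set ℂ := {z : ℂ | ‖P.eval z‖ < r} with hUdef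
  have hPc : Continuous fun z : ℂ => P.eval z := P.continuous
  have habs : Continuous fun z : ℂ => ‖P.eval z‖ := hPc.norm
  have hUopen : IsOpen U := isOpen_lt habs continuous_const
  have hUS : U ⊆ S := fun z hz => show ‖P.eval z‖ ≤ r from le_of_lt hz
  have hSclosed : IsClosed S := isClosed_le habs continuous_const
  have hdeg : 0 < P.degree := natDegree_pos_iff_degree_pos.mp hq
  have htend : Filter.Tendsto (fun z : ℂ => ‖P.eval z‖) (Bornology.cobounded ℂ) Filter.atTop :=
    P.tendsto_norm_atTop hdeg tendsto_norm_cobounded_atTop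
  have hSbdd : Bornology.IsBounded S := by
    rw [Bornology.isBounded_def]
    refine Filter.mem_of_superset (htend.eventually_gt_atTop r) ?_
    intro z hz
    simp only [Set.mem_setOf_eq] at hz
    simp only [Set.mem_compl_iff, hSdef, Set.mem_setOf_eq, not_le]
    exact hz
  have hScompact : IsCompact S := Metric.isCompact_of_isClosed_isBounded hSclosed hSbdd
  obtain ⟨δ, hδ0, hδsub⟩ := hK.exists_cthickening_subset_open hUopen hKsub
  set q : ℕ := P.natDegree with hqdef
  have hq0 : (0:ℝ) < q := by exact_mod_cast hq
  set ε : ℝ := δ / (16 * q) with hεdef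
  have hε0 : 0 < ε := by positivity
  set m : ℝ := ε ^ q with hmdef
  have hm0 : 0 < m := pow_pos hε0 q
  refine ⟨(δ/2) * (2*Real.pi*m^2) * (3*δ/8), by positivity, ?_⟩
  intro u hu
  apply le_csInf
  · exact ⟨_, 1, eval_one, rfl⟩
  rintro t ⟨Q, hQu, rfl⟩
  have hball : Metric.closedBall u δ ⊆ U :=
    (Metric.closedBall_subset_cthickening hu δ).trans hδsub
  have hballS : Metric.closedBall u δ ⊆ S := hball.trans hUS
  set g : ℂ → ℝ := fun z => ‖(Q*P).eval z‖^2 with hgdef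
  have hgc : Continuous g := ((Q*P).continuous.norm).pow 2
  have hg0 : ∀ z, 0 ≤ g z := fun z => by positivity
  -- rewrite the integral against the density
  have hw_meas : Measurable fun z : ℂ => (‖P.eval z‖₊)^2 := (hPc.nnnorm.pow 2).measurable
  have hμeq : ∫ z, ‖Q.eval z‖^2
      ∂((volume.restrict S).withDensity fun z => (‖P.eval z‖₊ : ℝ≥0∞)^2)
      = ∫ z in S, g z := by
    have hcast : (fun z : ℂ => (‖P.eval z‖₊ : ℝ≥0∞)^2)
        = fun z => ((fun w : ℂ => (‖P.eval w‖₊)^2) z : ℝ≥0∞) := by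
      funext z; push_cast; ring
    rw [hcast, integral_withDensity_eq_integral_smul hw_meas]
    refine integral_congr_ae (Filter.Eventually.of_forall fun z => ?_)
    show (‖P.eval z‖₊^2 : ℝ≥0) • ‖Q.eval z‖^2 = g z
    rw [NNReal.smul_def, hgdef]
    push_cast
    rw [smul_eq_mul, eval_mul, norm_mul, mul_pow]
    ring
  have hgint : IntegrableOn g S := hgc.continuousOn.integrableOn_compact hScompact
  have hsub_int : ∫ z in Metric.closedBall u δ, g z ≤ ∫ z in S, g z :=
    setIntegral_mono_set hgint (Filter.Eventually.of_forall fun z => hg0 z)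
      (HasSubset.Subset.eventuallyLE hballS)
  -- roots and the good set of radii
  have hsplits : P.Splits := IsAlgClosed.splits P
  have hroots_card : Multiset.card P.roots = q := splits_iff_card_roots.mp hsplits
  set s0 : Finset ℝ := (P.roots.map fun a => ‖u - a‖).toFinset with hs0def
  have hs0card : (s0.card : ℝ) * (2*ε) ≤ δ/8 := by
    have h1 : s0.card ≤ q := by
      calc s0.card ≤ Multiset.card (P.roots.map fun a => ‖u - a‖) :=
            Multiset.toFinset_card_le _
        _ = Multiset.card P.roots := Multiset.card_map _ _
        _ = q := hroots_card
    have h2 : (s0.card:ℝ) ≤ (q:ℝ) := by exact_mod_cast h1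
    have h3 : (q:ℝ) * (2*ε) = δ/8 := by
      rw [hεdef]; field_simp; ring
    nlinarith
  set good : Set ℝ := Set.Icc (δ/2) δ \ ⋃ a ∈ s0, Set.Ioo (a-ε) (a+ε) with hgooddef
  have hgood_meas : MeasurableSet good :=
    measurableSet_Icc.diff (s0.measurableSet_biUnion fun a _ => measurableSet_Ioo)
  have hgoodIcc : good ⊆ Set.Icc (δ/2) δ := Set.diff_subset
  have hgood_vol : ENNReal.ofReal (3*δ/8) ≤ volume good :=
    aux_good_measure s0 δ ε hδ0 hε0 hs0card
  have hIccfin : volume (Set.Icc (δ/2) δ) ≠ ⊤ := by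
    rw [Real.volume_Icc]; exact ENNReal.ofReal_ne_top
  have hgood_fin : volume good ≠ ⊤ := ne_top_of_le_ne_top hIccfin (measure_mono hgoodIcc)
  have hgood_toReal : 3*δ/8 ≤ (volume good).toReal := by
    have h := ENNReal.toReal_mono hgood_fin hgood_vol
    rwa [ENNReal.toReal_ofReal (by positivity)] at h
  have hgoodpos : ∀ ρ ∈ good, 0 < ρ :=
    fun ρ hρ => lt_of_lt_of_le (by positivity) (hgoodIcc hρ).1
  -- lower bound for |P| on good circles
  have hPm : ∀ ρ ∈ good, ∀ θ : ℝ, m ≤ ‖P.eval (circleMap u ρ θ)‖ := by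
    intro ρ hρg θ
    set z := circleMap u ρ θ with hzdef
    have hρpos : 0 < ρ := hgoodpos ρ hρg
    have hzdist : ‖z - u‖ = ρ := by
      rw [hzdef, circleMap_sub_center, norm_circleMap_zero,
        abs_of_pos hρpos]
    have hfac : ∀ a ∈ P.roots, ε ≤ ‖z - a‖ := by
      intro a ha
      have hd : ‖u - a‖ ∈ s0 := by
        rw [hs0def]
        exact Multiset.mem_toFinset.mpr (Multiset.mem_map_of_mem _ ha)
      set d : ℝ := ‖u - a‖ with hddef
      have hnot : ρ ∉ Set.Ioo (d - ε) (d + ε) := fun hmem => hρg.2 (Set.mem_biUnion hd hmem)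
      have h1 : ε ≤ |ρ - d| := by
        rw [Set.mem_Ioo, not_and_or] at hnot
        rcases hnot with h | h
        · push_neg at h
          rw [abs_of_nonpos (by linarith)]
          linarith
        · push_neg at h
          rw [abs_of_nonneg (by linarith)]
          linarith
      have h2 : |ρ - d| ≤ ‖z - a‖ := by
        have h3 := abs_norm_sub_norm_le (z - u) (a - u)
        have h4 : (z - u) - (a - u) = z - a := by ring
        rw [h4, hzdist] at h3
        have h5 : ‖a - u‖ = d := by rw [hddef, norm_sub_rev]
        rw [h5] at h3
        exact h3
      exact h1.trans h2
    have hprod : ‖P.eval z‖ = (P.roots.map fun a => ‖z - a‖).prod := by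
      conv_lhs => rw [hsplits.eq_prod_roots_of_monic hP]
      rw [eval_multiset_prod, Multiset.map_map]
      refine (map_multiset_prod (normHom (α := ℂ)) _).trans ?_
      rw [Multiset.map_map]
      congr 1
      refine Multiset.map_congr rfl fun a _ => ?_
      simp
    rw [hprod, hmdef, ← hroots_card, ← Multiset.card_map (fun a => ‖z - a‖) P.roots]
    refine aux_pow_card_le_prod _ ε hε0.le ?_
    intro x hx
    obtain ⟨a, ha, rfl⟩ := Multiset.mem_map.mp hx
    exact hfac a ha
  -- the indicator function and polar coordinates
  set G : ℂ → ℝ := Set.indicator (Metric.closedBall (0:ℂ) δ) (fun w => g (u + w)) with hGdef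
  have hgu_cont : Continuous fun w : ℂ => g (u + w) := hgc.comp (continuous_const.add continuous_id)
  have hGmeas : Measurable G := hgu_cont.measurable.indicator measurableSet_closedBall
  have hG0 : ∀ z, 0 ≤ G z := fun z => Set.indicator_nonneg (fun w _ => hg0 _) z
  obtain ⟨M, hM⟩ : ∃ M, ∀ z, G z ≤ M := by
    obtain ⟨M, hM⟩ := (isCompact_closedBall (0:ℂ) δ).exists_bound_of_continuousOn
      hgu_cont.continuousOn
    refine ⟨max M 0, fun z => ?_⟩
    by_cases hz : z ∈ Metric.closedBall (0:ℂ) δ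
    · rw [hGdef, Set.indicator_of_mem hz]
      exact le_max_of_le_left ((le_abs_self _).trans (hM z hz))
    · rw [hGdef, Set.indicator_of_notMem hz]
      exact le_max_right _ _
  set F : ℝ × ℝ → ℝ := fun p => p.1 • G (Complex.polarCoord.symm p) with hFdef
  have hsymm_eq : ∀ p : ℝ × ℝ,
      (Complex.polarCoord.symm p : ℂ) = (p.1 : ℂ) * Complex.exp (p.2 * Complex.I) := by
    intro p
    rw [Complex.polarCoord_symm_apply, Complex.exp_mul_I, Complex.ofReal_cos,
      Complex.ofReal_sin]
  have hsymm_cont : Continuous fun p : ℝ × ℝ => Complex.polarCoord.symm p := by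
    simp only [hsymm_eq]
    fun_prop
  have hFmeas : Measurable F := by
    rw [hFdef]
    simp only [smul_eq_mul]
    exact measurable_fst.mul (hGmeas.comp hsymm_cont.measurable)
  -- main chain
  have key : (δ/2) * (2*Real.pi*m^2) * (3*δ/8) ≤ ∫ z in Metric.closedBall u δ, g z := by
    have hpt : ∀ z : ℂ, G z = Set.indicator (Metric.closedBall u δ) g (u + z) := by
      intro z
      have hiff : z ∈ Metric.closedBall (0:ℂ) δ ↔ u + z ∈ Metric.closedBall u δ := by
        simp [Metric.mem_closedBall, dist_eq_norm]
      by_cases hz : z ∈ Metric.closedBall (0:ℂ) δ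
      · rw [hGdef, Set.indicator_of_mem hz, Set.indicator_of_mem (hiff.mp hz)]
      · rw [hGdef, Set.indicator_of_notMem hz,
          Set.indicator_of_notMem (fun hmem => hz (hiff.mpr hmem))]
    have e1 : ∫ z in Metric.closedBall u δ, g z = ∫ z, G z := by
      calc ∫ z in Metric.closedBall u δ, g z
          = ∫ z, Set.indicator (Metric.closedBall u δ) g z :=
            (integral_indicator measurableSet_closedBall).symm
        _ = ∫ z, Set.indicator (Metric.closedBall u δ) g (u + z) :=
            (integral_add_left_eq_self _ u).symm
        _ = ∫ z, G z := integral_congr_ae (Filter.Eventually.of_forall fun z => (hpt z).symm)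
    have e2 : ∫ z, G z = ∫ p in Complex.polarCoord.target, F p :=
      (Complex.integral_comp_polarCoord_symm G).symm
    set box : Set (ℝ × ℝ) := Set.Ioc 0 δ ×ˢ Set.Ioo (-Real.pi) Real.pi with hboxdef
    have hbox_meas : MeasurableSet box := measurableSet_Ioc.prod measurableSet_Ioo
    have hboxsub : box ⊆ Complex.polarCoord.target := by
      rw [Complex.polarCoord_target]
      exact Set.prod_mono Set.Ioc_subset_Ioi_self subset_rfl
    have e3 : ∫ p in Complex.polarCoord.target, F p = ∫ p in box, F p := by
      refine setIntegral_eq_of_subset_of_ae_diff_eq_zero ?_ hboxsub ?_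
      · rw [Complex.polarCoord_target]
        exact (measurableSet_Ioi.prod measurableSet_Ioo).nullMeasurableSet
      · refine Filter.Eventually.of_forall fun p hp => ?_
        obtain ⟨hpt', hps⟩ := hp
        rw [Complex.polarCoord_target] at hpt'
        have hp1 : 0 < p.1 := hpt'.1
        have hple : ¬ p.1 ≤ δ := fun hle => hps ⟨⟨hp1, hle⟩, hpt'.2⟩
        have hout : Complex.polarCoord.symm p ∉ Metric.closedBall (0:ℂ) δ := by
          rw [mem_closedBall_zero_iff, Complex.norm_polarCoord_symm,
            abs_of_pos hp1]
          exact hple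
        rw [hFdef]
        show p.1 • G (Complex.polarCoord.symm p) = 0
        rw [hGdef, Set.indicator_of_notMem hout, smul_zero]
    have hbox_bdd : Bornology.IsBounded box :=
      ((Metric.isBounded_Icc 0 δ).prod (Metric.isBounded_Icc (-Real.pi) Real.pi)).subset
        (Set.prod_mono Set.Ioc_subset_Icc_self Set.Ioo_subset_Icc_self)
    have hbox_fin : volume box ≠ ⊤ := hbox_bdd.measure_lt_top.ne
    have hFint_box : IntegrableOn F box := by
      refine Measure.integrableOn_of_bounded (M := δ * M) hbox_fin hFmeas.aestronglyMeasurable ?_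
      filter_upwards [ae_restrict_mem hbox_meas] with p hp
      obtain ⟨hp1, _⟩ := hp
      rw [hFdef]
      show |p.1 • G (Complex.polarCoord.symm p)| ≤ δ * M
      rw [smul_eq_mul, abs_mul, abs_of_pos hp1.1,
        abs_of_nonneg (hG0 _)]
      have hMnn : 0 ≤ M := le_trans (hG0 0) (hM 0)
      exact mul_le_mul hp1.2 (hM _) (hG0 _) hδ0.le
    have hgoodbox : good ×ˢ Set.Ioo (-Real.pi) Real.pi ⊆ box := by
      refine Set.prod_mono ?_ subset_rfl
      intro ρ hρ
      exact ⟨hgoodpos ρ hρ, (hgoodIcc hρ).2⟩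
    have e4 : ∫ p in good ×ˢ Set.Ioo (-Real.pi) Real.pi, F p ≤ ∫ p in box, F p := by
      refine setIntegral_mono_set hFint_box ?_ (HasSubset.Subset.eventuallyLE hgoodbox)
      filter_upwards [ae_restrict_mem hbox_meas] with p hp
      exact smul_nonneg hp.1.1.le (hG0 _)
    set F' : ℝ × ℝ → ℝ := fun p => p.1 * g (u + (p.1 : ℂ) * Complex.exp (p.2 * Complex.I))
      with hF'def
    have hprodmeas : MeasurableSet (good ×ˢ Set.Ioo (-Real.pi) Real.pi) :=
      hgood_meas.prod measurableSet_Ioo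
    have e5 : ∫ p in good ×ˢ Set.Ioo (-Real.pi) Real.pi, F p
        = ∫ p in good ×ˢ Set.Ioo (-Real.pi) Real.pi, F' p := by
      refine setIntegral_congr_fun hprodmeas fun p hp => ?_
      obtain ⟨hp1, _⟩ := hp
      have hpos : 0 < p.1 := hgoodpos _ hp1
      have hle : p.1 ≤ δ := (hgoodIcc hp1).2
      have hmem : Complex.polarCoord.symm p ∈ Metric.closedBall (0:ℂ) δ := by
        rw [mem_closedBall_zero_iff, Complex.norm_polarCoord_symm,
          abs_of_pos hpos]
        exact hle
      rw [hFdef]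
      show p.1 • G (Complex.polarCoord.symm p) = F' p
      rw [hGdef, Set.indicator_of_mem hmem, smul_eq_mul, hF'def, hsymm_eq]
    have hF'cont : Continuous F' := by
      rw [hF'def]
      fun_prop
    have hF'int : IntegrableOn F' (good ×ˢ Set.Ioo (-Real.pi) Real.pi) := by
      have hcomp : IsCompact (Set.Icc (δ/2) δ ×ˢ Set.Icc (-Real.pi) Real.pi) :=
        isCompact_Icc.prod isCompact_Icc
      exact (hF'cont.continuousOn.integrableOn_compact hcomp).mono_set
        (Set.prod_mono hgoodIcc Set.Ioo_subset_Icc_self)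
    have e6 : ∫ p in good ×ˢ Set.Ioo (-Real.pi) Real.pi, F' p
        = ∫ ρ in good, ∫ θ in Set.Ioo (-Real.pi) Real.pi, F' (ρ, θ) := by
      rw [Measure.volume_eq_prod] at hF'int ⊢
      exact setIntegral_prod F' hF'int
    have hcircle_eq : ∀ ρ : ℝ, ∀ θ : ℝ,
        g (u + (ρ : ℂ) * Complex.exp (θ * Complex.I)) = g (circleMap u ρ θ) := by
      intro ρ θ; rfl
    have hinner : ∀ ρ ∈ good,
        (δ/2) * (2*Real.pi*m^2) ≤ ∫ θ in Set.Ioo (-Real.pi) Real.pi, F' (ρ, θ) := by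
      intro ρ hρ
      have hρpos : 0 < ρ := hgoodpos ρ hρ
      have hρhalf : δ/2 ≤ ρ := (hgoodIcc hρ).1
      have hA := aux_circle Q P u ρ m hρpos hm0 hQu (hPm ρ hρ)
      have heq : ∫ θ in Set.Ioo (-Real.pi) Real.pi, F' (ρ, θ)
          = ρ * ∫ θ in Set.Ioo (-Real.pi) Real.pi, ‖(Q*P).eval (circleMap u ρ θ)‖^2 := by
        rw [← integral_const_mul]
        refine setIntegral_congr_fun measurableSet_Ioo fun θ _ => ?_
        rw [hF'def]
        show ρ * g (u + (ρ : ℂ) * Complex.exp (θ * Complex.I)) = _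
        rw [hcircle_eq]
      rw [heq]
      calc (δ/2) * (2*Real.pi*m^2) ≤ ρ * (2*Real.pi*m^2) :=
            mul_le_mul_of_nonneg_right hρhalf (by positivity)
        _ ≤ ρ * ∫ θ in Set.Ioo (-Real.pi) Real.pi, ‖(Q*P).eval (circleMap u ρ θ)‖^2 :=
            mul_le_mul_of_nonneg_left hA hρpos.le
    have hinner_int : IntegrableOn
        (fun ρ => ∫ θ in Set.Ioo (-Real.pi) Real.pi, F' (ρ, θ)) good := by
      have h := hF'int
      rw [IntegrableOn, Measure.volume_eq_prod, ← Measure.prod_restrict] at h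
      exact h.integral_prod_left
    have e7 : ((δ/2) * (2*Real.pi*m^2)) * (volume good).toReal
        ≤ ∫ ρ in good, ∫ θ in Set.Ioo (-Real.pi) Real.pi, F' (ρ, θ) :=
      by have h := setIntegral_ge_of_const_le hgood_meas hgood_fin hinner hinner_int
         rw [smul_eq_mul, mul_comm] at h; exact h
    calc (δ/2) * (2*Real.pi*m^2) * (3*δ/8)
        ≤ (δ/2) * (2*Real.pi*m^2) * (volume good).toReal :=
          mul_le_mul_of_nonneg_left hgood_toReal (by positivity)
      _ ≤ ∫ ρ in good, ∫ θ in Set.Ioo (-Real.pi) Real.pi, F' (ρ, θ) := e7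
      _ = ∫ p in good ×ˢ Set.Ioo (-Real.pi) Real.pi, F' p := e6.symm
      _ = ∫ p in good ×ˢ Set.Ioo (-Real.pi) Real.pi, F p := e5.symm
      _ ≤ ∫ p in box, F p := e4
      _ = ∫ p in Complex.polarCoord.target, F p := e3.symm
      _ = ∫ z, G z := e2.symm
      _ = ∫ z in Metric.closedBall u δ, g z := e1.symm
  rw [hμeq]
  exact key.trans hsub_int
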